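/- Let M be a closed subspace of H²(𝔻, ℂ^m) that is nearly S*-invariant with defect p and defect space F with orthonormal basis {E_1, …, E_p}, and let {W_1, …, W_r} be an orthonormal basis of W = M ⊖ (M ∩ zH²(𝔻, ℂ^m)). Then M is almost invariant for S* with defect p (i.e. S*M ⊆ M ⊕ F) if and only if S*W_i ∈ M ⊕ F for every i = 1, …, r. -/

import Mathlib

noncomputable section

open scoped ENNReal ComplexConjugate
open ContinuousLinearMap

abbrev Cm (m : ℕ) := EuclideanSpace ℂ (Fin m)
abbrev H2 (m : ℕ) := lp (fun _ : ℕ => Cm m) 2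

namespace Hardy

variable {m r : ℕ}

lemma two_toReal : (2 : ℝ≥0∞).toReal = 2 := by norm_num

def shiftFun (f : ℕ → Cm m) : ℕ → Cm m := fun n => match n with
  | 0 => 0
  | k + 1 => f k

lemma shift_memℓp (f : H2 m) : Memℓp (shiftFun (f : ∀ _, Cm m)) 2 := by
  rw [memℓp_gen_iff (by norm_num)]
  have hs : Summable fun n : ℕ => ‖(f : ∀ _, Cm m) n‖ ^ (2 : ℝ≥0∞).toReal :=
    (lp.memℓp f).summable (by norm_num)
  have : Summable fun n : ℕ =>
      ‖shiftFun (f : ∀ _, Cm m) (n + 1)‖ ^ (2 : ℝ≥0∞).toReal := hs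
  exact (summable_nat_add_iff 1).mp this

/-- The forward shift `S` on the vector-valued Hardy space (Taylor-coefficient model). -/
def S (m : ℕ) : H2 m →L[ℂ] H2 m :=
  LinearMap.mkContinuous
    { toFun := fun f => ⟨shiftFun (f : ∀ _, Cm m), shift_memℓp f⟩
      map_add' := by
        intro f g
        apply Subtype.ext
        have key : shiftFun (↑(f + g) : ∀ _, Cm m)
            = shiftFun (f : ∀ _, Cm m) + shiftFun (g : ∀ _, Cm m) := by
          funext n
          have h : (shiftFun (f : ∀ _, Cm m) + shiftFun (g : ∀ _, Cm m)) n
              = shiftFun (f : ∀ _, Cm m) n + shiftFun (g : ∀ _, Cm m) n := rfl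
          rw [h, lp.coeFn_add]
          cases n with
          | zero => simp [shiftFun]
          | succ k => simp [shiftFun]
        exact key
      map_smul' := by
        intro c f
        apply Subtype.ext
        have key : shiftFun (↑(c • f) : ∀ _, Cm m)
            = c • shiftFun (f : ∀ _, Cm m) := by
          funext n
          have h : (c • shiftFun (f : ∀ _, Cm m)) n
              = c • shiftFun (f : ∀ _, Cm m) n := rfl
          rw [h, lp.coeFn_smul]
          cases n with
          | zero => simp [shiftFun]
          | succ k => simp [shiftFun]
        exact key }
    1
    (by
      intro f
      simp only [one_mul]
      apply le_of_eq
      have h2 : (0:ℝ) < (2 : ℝ≥0∞).toReal := by norm_num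
      rw [lp.norm_eq_tsum_rpow h2, lp.norm_eq_tsum_rpow h2]
      congr 1
      have hsum : Summable fun n : ℕ =>
          ‖shiftFun (f : ∀ _, Cm m) n‖ ^ (2 : ℝ≥0∞).toReal := by
        rw [← memℓp_gen_iff (by norm_num)]; exact shift_memℓp f
      have key : ∑' n : ℕ, ‖shiftFun (f : ∀ _, Cm m) n‖ ^ (2 : ℝ≥0∞).toReal
          = ∑' n : ℕ, ‖(f : ∀ _, Cm m) n‖ ^ (2 : ℝ≥0∞).toReal := by
        rw [hsum.tsum_eq_zero_add]
        simp [shiftFun]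
      exact key)

/-- The backward shift `S*` (the adjoint of the forward shift). -/
def Sadj (m : ℕ) : H2 m →L[ℂ] H2 m := ContinuousLinearMap.adjoint (S m)

/-- `T` is a multiplier (multiplication by an operator-valued analytic function),
characterized by intertwining the shifts. -/
def IsMultiplier (T : H2 r →L[ℂ] H2 m) : Prop := S m ∘L T = T ∘L S r

/-- `T` is (the multiplication operator of) an inner multiplier: an isometric multiplier. -/
def IsInnerMultiplier (T : H2 r →L[ℂ] H2 m) : Prop :=
  (∀ f, ‖T f‖ = ‖f‖) ∧ IsMultiplier T

/-- The model space `K_Θ = H² ⊖ Θ H²`. -/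
def modelSpace (T : H2 r →L[ℂ] H2 m) : Submodule ℂ (H2 m) := (LinearMap.range (T : H2 r →ₗ[ℂ] H2 m))ᗮ

/-- The constant function with value `v` (Taylor coefficients `(v,0,0,…)`). -/
def const (v : Cm m) : H2 m := lp.single 2 0 v

/-- The constant function `eᵢ`. -/
def e (m : ℕ) (i : Fin m) : H2 m := const (EuclideanSpace.single i 1)

lemma coord_norm_le (x : Cm m) (i : Fin m) : ‖x i‖ ≤ ‖x‖ := by
  rw [EuclideanSpace.norm_eq]
  have h1 : ‖x i‖ = Real.sqrt (‖x i‖ ^ 2) := by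
    rw [Real.sqrt_sq (norm_nonneg _)]
  rw [h1]
  apply Real.sqrt_le_sqrt
  exact Finset.single_le_sum (f := fun j => ‖x j‖ ^ 2)
    (fun j _ => by positivity) (Finset.mem_univ i)

lemma coord_memℓp (i : Fin m) (f : H2 m) :
    Memℓp (fun n => EuclideanSpace.single (0 : Fin 1) ((f : ∀ _, Cm m) n i)) 2 := by
  rw [memℓp_gen_iff (by norm_num)]
  have hs : Summable fun n : ℕ => ‖(f : ∀ _, Cm m) n‖ ^ (2 : ℝ≥0∞).toReal :=
    (lp.memℓp f).summable (by norm_num)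
  apply Summable.of_nonneg_of_le (fun n => by positivity) _ hs
  intro n
  have : ‖EuclideanSpace.single (0 : Fin 1) ((f : ∀ _, Cm m) n i)‖
      = ‖(f : ∀ _, Cm m) n i‖ := by
    simp [EuclideanSpace.norm_single]
  rw [this]
  have h := coord_norm_le ((f : ∀ _, Cm m) n) i
  exact Real.rpow_le_rpow (norm_nonneg _) h (by norm_num)

/-- The `i`-th coordinate (column) of a `ℂᵐ`-valued Hardy space function, as a scalar
Hardy space function. -/
def coord (i : Fin m) (f : H2 m) : H2 1 :=
  ⟨fun n => EuclideanSpace.single (0 : Fin 1) ((f : ∀ _, Cm m) n i), coord_memℓp i f⟩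

/-- A multiplier on `H²(𝔻, ℂᵐ)` is diagonal, `Ψ = diag(ψ₁, …, ψ_m)`, with scalar
multipliers `ψᵢ` represented by the operators `t i`. -/
def IsDiagonal (T : H2 m →L[ℂ] H2 m) (t : Fin m → (H2 1 →L[ℂ] H2 1)) : Prop :=
  ∀ (f : H2 m) (i : Fin m), coord i (T f) = t i (coord i f)

/-- The analytic function on the disc associated to a scalar Hardy space element. -/
def toFun (f : H2 1) (z : ℂ) : ℂ := ∑' n : ℕ, ((f : ∀ _, Cm 1) n 0) * z ^ n

/-- `F` is a finite Blaschke product on the unit disc. -/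
def IsFiniteBlaschke (F : ℂ → ℂ) : Prop :=
  ∃ (k : ℕ) (c : ℂ) (a : Fin k → ℂ), ‖c‖ = 1 ∧ (∀ i, ‖a i‖ < 1) ∧
    ∀ z ∈ Metric.ball (0 : ℂ) 1,
      F z = c * ∏ i, (z - a i) / (1 - (starRingEnd ℂ) (a i) * z)

/-- `W = M ⊖ (M ∩ zH²)`. -/
def Wspace (M : Submodule ℂ (H2 m)) : Submodule ℂ (H2 m) :=
  M ⊓ (M ⊓ LinearMap.range (S m : H2 m →ₗ[ℂ] H2 m))ᗮ

end Hardy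

namespace Hardy

variable {m : ℕ}

lemma S_coe (f : H2 m) : ((S m f : H2 m) : ∀ _, Cm m) = shiftFun f := rfl

lemma S_norm (f : H2 m) : ‖S m f‖ = ‖f‖ := by
  have h2 : (0:ℝ) < (2 : ℝ≥0∞).toReal := by norm_num
  rw [lp.norm_eq_tsum_rpow h2, lp.norm_eq_tsum_rpow h2]
  congr 1
  have hsum : Summable fun n : ℕ =>
      ‖shiftFun (f : ∀ _, Cm m) n‖ ^ (2 : ℝ≥0∞).toReal := by
    rw [← memℓp_gen_iff (by norm_num)]; exact shift_memℓp f
  have key : ∑' n : ℕ, ‖shiftFun (f : ∀ _, Cm m) n‖ ^ (2 : ℝ≥0∞).toReal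
      = ∑' n : ℕ, ‖(f : ∀ _, Cm m) n‖ ^ (2 : ℝ≥0∞).toReal := by
    rw [hsum.tsum_eq_zero_add]
    simp [shiftFun]
  simpa [S_coe] using key

lemma S_range_closed : IsClosed ((LinearMap.range (S m : H2 m →ₗ[ℂ] H2 m) : Submodule ℂ (H2 m)) : Set (H2 m)) := by
  have li : H2 m →ₗᵢ[ℂ] H2 m := ⟨(S m).toLinearMap, S_norm⟩
  have : (LinearMap.range (S m : H2 m →ₗ[ℂ] H2 m) : Set (H2 m)) = Set.range (S m) := by
    ext x; simp [LinearMap.mem_range]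
  rw [this]
  exact (LinearIsometry.isometry ⟨(S m).toLinearMap, S_norm⟩).isClosedEmbedding.isClosed_range

lemma mem_range_S_coe_zero (x : H2 m) (hx : x ∈ LinearMap.range (S m : H2 m →ₗ[ℂ] H2 m)) :
    (x : ∀ _ : ℕ, Cm m) 0 = 0 := by
  obtain ⟨g, rfl⟩ := hx
  show shiftFun (g : ∀ _, Cm m) 0 = 0
  rfl

end Hardy
open Hardy in
/-- A closed subspace `M` that is nearly `S*`-invariant with defect space `Fd` is almost
invariant for `S*` (i.e. `S*M ⊆ M ⊕ Fd`) iff `S*Wᵢ ∈ M ⊕ Fd` for each element `Wᵢ` of an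
orthonormal basis of `W = M ⊖ (M ∩ zH²)`. -/
theorem stmt_15 (m p r : ℕ) (M Fd : Submodule ℂ (H2 m))
    (hclosed : IsClosed (M : Set (H2 m)))
    (hFdim : Module.finrank ℂ Fd = p) (hFfin : FiniteDimensional ℂ Fd)
    (horth : ∀ x ∈ M, ∀ y ∈ Fd, (inner ℂ x y : ℂ) = 0)
    (hnearly : ∀ F ∈ M, (F : ∀ _ : ℕ, Cm m) 0 = 0 → Sadj m F ∈ M ⊔ Fd)
    (W_ : Fin r → H2 m) (hWmem : ∀ i, W_ i ∈ Wspace M) (hWON : Orthonormal ℂ W_)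
    (hWspan : Submodule.span ℂ (Set.range W_) = Wspace M) :
    (∀ F ∈ M, Sadj m F ∈ M ⊔ Fd) ↔ (∀ i, Sadj m (W_ i) ∈ M ⊔ Fd) := by
  constructor
  · intro h i
    exact h (W_ i) (hWmem i).1
  · intro h F hF
    set G : H2 m := ∑ i, (inner ℂ (W_ i) F : ℂ) • W_ i with hG
    have hGW : G ∈ Wspace M := by
      rw [← hWspan]
      exact Submodule.sum_mem _ fun i _ =>
        Submodule.smul_mem _ _ (Submodule.subset_span ⟨i, rfl⟩)
    have hGM : G ∈ M := hGW.1
    set K : H2 m := F - G with hK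
    have hKM : K ∈ M := M.sub_mem hF hGM
    have hKorth : ∀ x ∈ Wspace M, (inner ℂ x K : ℂ) = 0 := by
      have hj : ∀ j, (inner ℂ (W_ j) K : ℂ) = 0 := by
        intro j
        simp only [hK, inner_sub_right, hG, inner_sum, inner_smul_right,
          orthonormal_iff_ite.mp hWON]
        simp
      intro x hx
      rw [← hWspan] at hx
      induction hx using Submodule.span_induction with
      | mem y hy => obtain ⟨i, rfl⟩ := hy; exact hj i
      | zero => simp
      | add y z _ _ hy hz => rw [inner_add_left, hy, hz, add_zero]
      | smul c y _ hy => rw [inner_smul_left, hy, mul_zero]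
    -- decompose K with respect to N = M ⊓ range S
    set N : Submodule ℂ (H2 m) := M ⊓ LinearMap.range (S m : H2 m →ₗ[ℂ] H2 m) with hN
    have hNclosed : IsClosed (N : Set (H2 m)) := hclosed.inter S_range_closed
    haveI : CompleteSpace N := hNclosed.completeSpace_coe
    obtain ⟨y, hy, z, hz, hKyz⟩ := N.exists_add_mem_mem_orthogonal K
    have hzW : z ∈ Wspace M := by
      refine ⟨?_, hz⟩
      have : z = K - y := by rw [hKyz]; abel
      rw [this]
      exact M.sub_mem hKM hy.1
    have hz0 : z = 0 := by
      have h1 : (inner ℂ z K : ℂ) = 0 := hKorth z hzW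
      have h2 : (inner ℂ z y : ℂ) = 0 := by
        have := (Submodule.mem_orthogonal N z).mp hz y hy
        rw [← inner_conj_symm, this, map_zero]
      rw [hKyz, inner_add_right, h2, zero_add] at h1
      exact inner_self_eq_zero.mp h1
    have hKrange : K ∈ LinearMap.range (S m : H2 m →ₗ[ℂ] H2 m) := by
      rw [hKyz, hz0, add_zero]; exact hy.2
    have hK0 : (K : ∀ _ : ℕ, Cm m) 0 = 0 := mem_range_S_coe_zero K hKrange
    have hSK : Sadj m K ∈ M ⊔ Fd := hnearly K hKM hK0
    have hSG : Sadj m G ∈ M ⊔ Fd := by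
      rw [hG, map_sum]
      exact Submodule.sum_mem _ fun i _ => by
        rw [map_smul]
        exact Submodule.smul_mem _ _ (h i)
    have : Sadj m F = Sadj m G + Sadj m K := by
      rw [← map_add]; congr 1; rw [hK]; abel
    rw [this]
    exact Submodule.add_mem _ hSG hSK
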